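/- Let Ĝ be a group with a surjective homomorphism π: Ĝ → {±1} and kernel G, let λ̂ be a normalized π-twisted 2-cocycle on Ĝ valued in ℂˣ, and let λ be its restriction to G. Let (V, φ) be a λ-twisted representation of G and let ς ∈ Ĝ∖G be odd. Then φ^ς is again a λ-twisted representation of G on the dual space V^∨; that is, φ^ς(g) ∘ φ^ς(h) = λ(g,h) · φ^ς(gh) for all g, h ∈ G. (This is the statement that the duality functor P^ς: Rep^λ(G)^op → Rep^λ(G), (V,φ) ↦ (V^∨, φ^ς), of Section 4.5 of the paper is well defined.) -/

import Mathlib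

/-- Conjugation `g ↦ ς g ς⁻¹` preserves the kernel of `π`. -/
def kconj {Ghat : Type*} [Group Ghat] (π : Ghat →* ℤˣ) (ς : Ghat) (g : π.ker) :
    π.ker :=
  ⟨ς * (g : Ghat) * ς⁻¹, by
    have hg : π (g : Ghat) = 1 := MonoidHom.mem_ker.mp g.2
    rw [MonoidHom.mem_ker, map_mul, map_mul, map_inv, hg, mul_one, mul_inv_cancel]⟩

/-- The reflection-twisted transgression `τ^ref_π(λ̂)([ς]g)` of the paper:
`τ_ς(g) = λ̂(g⁻¹,g)⁻¹ · λ̂(ςg⁻¹ς⁻¹, ς) · λ̂(ς, g⁻¹)⁻¹`. -/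
def tau {Ghat : Type*} [Group Ghat] (lam : Ghat → Ghat → ℂˣ)
    (ς g : Ghat) : ℂˣ :=
  (lam g⁻¹ g)⁻¹ * lam (ς * g⁻¹ * ς⁻¹) ς * (lam ς g⁻¹)⁻¹

/-- The dualization construction of Section 4.5 of the paper: given an assignment
`φ` of linear endomorphisms of `V` to elements of `G = ker π`, the assignment
`φ^ς(g) := τ_ς(g)⁻¹ · (φ(ς g⁻¹ ς⁻¹))^∨` of linear endomorphisms of the dual `V^∨`. -/
noncomputable def dualTw {Ghat : Type*} [Group Ghat] (π : Ghat →* ℤˣ) (lam : Ghat → Ghat → ℂˣ)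
    (ς : Ghat) {V : Type*} [AddCommGroup V] [Module ℂ V]
    (φ : π.ker → (V →ₗ[ℂ] V)) (g : π.ker) :
    Module.Dual ℂ V →ₗ[ℂ] Module.Dual ℂ V :=
  (((tau lam ς (g : Ghat))⁻¹ : ℂˣ) : ℂ) • LinearMap.dualMap (φ (kconj π ς g⁻¹))

section Aux

variable {Ghat : Type*} [Group Ghat] (π : Ghat →* ℤˣ) (lam : Ghat → Ghat → ℂˣ)

/-- `dualMap` commutes with scalar multiplication. -/
lemma dualMap_smul' {V W : Type*} [AddCommGroup V] [Module ℂ V] [AddCommGroup W] [Module ℂ W]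
    (c : ℂ) (f : V →ₗ[ℂ] W) : (c • f).dualMap = c • f.dualMap := by
  ext ψ v
  simp [LinearMap.dualMap_apply, map_smul]

variable (hnorm : lam 1 1 = 1)
  (hcoc : ∀ ω₁ ω₂ ω₃ : Ghat,
      lam ω₂ ω₃ ^ ((π ω₁ : ℤˣ) : ℤ) * lam ω₁ (ω₂ * ω₃) = lam (ω₁ * ω₂) ω₃ * lam ω₁ ω₂)

include hcoc

lemma lam_even (ω₁ ω₂ ω₃ : Ghat) (h1 : π ω₁ = 1) :
    lam ω₂ ω₃ * lam ω₁ (ω₂ * ω₃) = lam (ω₁ * ω₂) ω₃ * lam ω₁ ω₂ := by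
  have := hcoc ω₁ ω₂ ω₃
  rwa [h1, Units.val_one, zpow_one] at this

lemma lam_odd (ω₁ ω₂ ω₃ : Ghat) (h1 : π ω₁ = -1) :
    (lam ω₂ ω₃)⁻¹ * lam ω₁ (ω₂ * ω₃) = lam (ω₁ * ω₂) ω₃ * lam ω₁ ω₂ := by
  have := hcoc ω₁ ω₂ ω₃
  rwa [h1, Units.val_neg, Units.val_one, zpow_neg_one] at this

include hnorm

lemma lam_one_right (ω : Ghat) : lam ω 1 = 1 := by
  have := hcoc ω 1 1
  rw [hnorm, one_zpow, one_mul] at this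
  simp only [mul_one] at this
  exact left_eq_mul.mp this

lemma lam_one_left (ω : Ghat) : lam 1 ω = 1 := by
  have := hcoc 1 1 ω
  rw [map_one, Units.val_one, zpow_one, hnorm, mul_one] at this
  simp only [one_mul] at this
  exact right_eq_mul.mp this.symm

/-- The simplification `τ_ς(g) = λ(ς,g)·λ(ςg⁻¹ς⁻¹, ςg)` for even `g` and odd `ς`. -/
lemma tau_eq (ς g : Ghat) (hς : π ς = -1) (hg : π g = 1) :
    tau lam ς g = lam ς g * lam (ς * g⁻¹ * ς⁻¹) (ς * g) := by
  have hconj : π (ς * g⁻¹ * ς⁻¹) = 1 := by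
    rw [map_mul, map_mul, map_inv, map_inv, hς, hg]; decide
  have hB := lam_odd π lam hcoc ς g⁻¹ g hς
  rw [inv_mul_cancel, lam_one_right π lam hnorm hcoc, mul_one] at hB
  -- hB : (lam g⁻¹ g)⁻¹ = lam (ς * g⁻¹) g * lam ς g⁻¹
  have hA := lam_even π lam hcoc (ς * g⁻¹ * ς⁻¹) ς g hconj
  rw [show ς * g⁻¹ * ς⁻¹ * ς = ς * g⁻¹ by group] at hA
  -- hA : lam ς g * lam (ςg⁻¹ς⁻¹) (ς*g) = lam (ς*g⁻¹) g * lam (ςg⁻¹ς⁻¹) ς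
  have hBc := congrArg Units.val hB
  have hAc := congrArg Units.val hA
  push_cast [Units.val_inv_eq_inv_val] at hAc hBc
  rw [Units.ext_iff]
  unfold tau
  push_cast [Units.val_inv_eq_inv_val]
  rw [hBc]
  set p := ((lam (ς * g⁻¹) g : ℂˣ) : ℂ) with hp
  set z := ((lam ς g⁻¹ : ℂˣ) : ℂ) with hz0
  set y := ((lam (ς * g⁻¹ * ς⁻¹) ς : ℂˣ) : ℂ) with hy
  set s := ((lam ς g : ℂˣ) : ℂ) with hs
  set t := ((lam (ς * g⁻¹ * ς⁻¹) (ς * g) : ℂˣ) : ℂ) with ht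
  have hz : z ≠ 0 := Units.ne_zero _
  field_simp
  linear_combination (-1) * hAc

/-- The key cocycle identity at the level of complex numbers. -/
lemma key (ς g h : Ghat) (hς : π ς = -1) (hg : π g = 1) (hh : π h = 1) :
    (((tau lam ς g)⁻¹ : ℂˣ) : ℂ) * (((tau lam ς h)⁻¹ : ℂˣ) : ℂ) *
        ((lam (ς * h⁻¹ * ς⁻¹) (ς * g⁻¹ * ς⁻¹) : ℂˣ) : ℂ)
      = ((lam g h : ℂˣ) : ℂ) * (((tau lam ς (g * h))⁻¹ : ℂˣ) : ℂ) := by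
  have hgh : π (g * h) = 1 := by rw [map_mul, hg, hh, mul_one]
  have hconjh : π (ς * h⁻¹ * ς⁻¹) = 1 := by
    rw [map_mul, map_mul, map_inv, map_inv, hς, hh]; decide
  have hconjgh : π ((ς * h⁻¹ * ς⁻¹) * (ς * g⁻¹ * ς⁻¹)) = 1 := by
    rw [map_mul, map_mul, map_mul, map_mul, map_mul, map_inv, map_inv, map_inv, hς, hg, hh]
    decide
  have hEc : ∀ ω₁ ω₂ ω₃ : Ghat, π ω₁ = 1 →
      ((lam ω₂ ω₃ : ℂˣ) : ℂ) * ((lam ω₁ (ω₂ * ω₃) : ℂˣ) : ℂ)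
        = ((lam (ω₁ * ω₂) ω₃ : ℂˣ) : ℂ) * ((lam ω₁ ω₂ : ℂˣ) : ℂ) := by
    intro ω₁ ω₂ ω₃ h1
    have := congrArg Units.val (lam_even π lam hcoc ω₁ ω₂ ω₃ h1)
    push_cast at this
    exact this
  -- rewrite the taus
  have t1 := congrArg Units.val (tau_eq π lam hnorm hcoc ς g hς hg)
  have t2 := congrArg Units.val (tau_eq π lam hnorm hcoc ς h hς hh)
  have t3 := congrArg Units.val (tau_eq π lam hnorm hcoc ς (g * h) hς hgh)
  push_cast at t1 t2 t3
  rw [Units.val_inv_eq_inv_val, Units.val_inv_eq_inv_val, Units.val_inv_eq_inv_val, t1, t2, t3]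
  rw [show ς * (g * h)⁻¹ * ς⁻¹ = (ς * h⁻¹ * ς⁻¹) * (ς * g⁻¹ * ς⁻¹) by group,
    show ς * (g * h) = ς * g * h by group]
  -- instances of the cocycle condition
  have e1 : ((lam ς (g * h) : ℂˣ) : ℂ)
      = ((lam g h : ℂˣ) : ℂ) * (((lam (ς * g) h : ℂˣ) : ℂ) * ((lam ς g : ℂˣ) : ℂ)) := by
    have ho := congrArg Units.val (lam_odd π lam hcoc ς g h hς)
    push_cast [Units.val_inv_eq_inv_val] at ho
    have hA0 : ((lam g h : ℂˣ) : ℂ) ≠ 0 := Units.ne_zero _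
    field_simp at ho
    linear_combination ho
  have eC := hEc (ς * h⁻¹ * ς⁻¹) (ς * g⁻¹ * ς⁻¹) (ς * g) hconjh
  rw [show ς * g⁻¹ * ς⁻¹ * (ς * g) = ς by group] at eC
  have eD := hEc ((ς * h⁻¹ * ς⁻¹) * (ς * g⁻¹ * ς⁻¹)) (ς * g) h hconjgh
  rw [show (ς * h⁻¹ * ς⁻¹) * (ς * g⁻¹ * ς⁻¹) * (ς * g) = ς * h⁻¹ by group] at eD
  have eAh := hEc (ς * h⁻¹ * ς⁻¹) ς h hconjh
  rw [show ς * h⁻¹ * ς⁻¹ * ς = ς * h⁻¹ by group] at eAh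
  -- finish
  set a := ((lam g h : ℂˣ) : ℂ) with ha
  set b := ((lam ς g : ℂˣ) : ℂ) with hb
  set c := ((lam (ς * g⁻¹ * ς⁻¹) (ς * g) : ℂˣ) : ℂ) with hc
  set d := ((lam ς h : ℂˣ) : ℂ) with hd
  set e := ((lam (ς * h⁻¹ * ς⁻¹) (ς * h) : ℂˣ) : ℂ) with he
  set f := ((lam ς (g * h) : ℂˣ) : ℂ) with hf
  set m := ((lam ((ς * h⁻¹ * ς⁻¹) * (ς * g⁻¹ * ς⁻¹)) (ς * g * h) : ℂˣ) : ℂ) with hm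
  set k := ((lam (ς * h⁻¹ * ς⁻¹) (ς * g⁻¹ * ς⁻¹) : ℂˣ) : ℂ) with hk
  set p := ((lam (ς * g) h : ℂˣ) : ℂ) with hp
  set q := ((lam ((ς * h⁻¹ * ς⁻¹) * (ς * g⁻¹ * ς⁻¹)) (ς * g) : ℂˣ) : ℂ) with hq
  set r := ((lam (ς * h⁻¹) h : ℂˣ) : ℂ) with hr
  set s := ((lam (ς * h⁻¹ * ς⁻¹) ς : ℂˣ) : ℂ) with hs
  have h1 : b ≠ 0 := Units.ne_zero _
  have h2 : c ≠ 0 := Units.ne_zero _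
  have h3 : d ≠ 0 := Units.ne_zero _
  have h4 : e ≠ 0 := Units.ne_zero _
  have h5 : f ≠ 0 := Units.ne_zero _
  have h6 : m ≠ 0 := Units.ne_zero _
  field_simp
  linear_combination (m * k) * e1 + (a * b * k) * eD - (a * b * r) * eC - (a * b * c) * eAh

end Aux

/-- Well-definedness of the duality functor `P^ς` of Section 4.5 of the paper: if
`(V, φ)` is a `λ`-twisted representation of `G` and `ς` is odd, then `φ^ς` is again a
`λ`-twisted representation of `G` on the dual space `V^∨`:
`φ^ς(g) ∘ φ^ς(h) = λ(g,h) · φ^ς(gh)`. -/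
theorem dual_twisted_representation
    {Ghat : Type*} [Group Ghat] (π : Ghat →* ℤˣ) (hπ : Function.Surjective π)
    (lam : Ghat → Ghat → ℂˣ) (hnorm : lam 1 1 = 1)
    (hcoc : ∀ ω₁ ω₂ ω₃ : Ghat,
      lam ω₂ ω₃ ^ ((π ω₁ : ℤˣ) : ℤ) * lam ω₁ (ω₂ * ω₃) = lam (ω₁ * ω₂) ω₃ * lam ω₁ ω₂)
    {V : Type*} [AddCommGroup V] [Module ℂ V] [FiniteDimensional ℂ V]
    (φ : π.ker → (V ≃ₗ[ℂ] V))
    (hφ : ∀ g h : π.ker, (φ g).toLinearMap ∘ₗ (φ h).toLinearMap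
      = ((lam (g : Ghat) (h : Ghat) : ℂˣ) : ℂ) • (φ (g * h)).toLinearMap)
    (ς : Ghat) (hς : π ς = -1) :
    ∀ g h : π.ker,
      dualTw π lam ς (fun k => (φ k).toLinearMap) g ∘ₗ
          dualTw π lam ς (fun k => (φ k).toLinearMap) h
        = ((lam (g : Ghat) (h : Ghat) : ℂˣ) : ℂ) •
            dualTw π lam ς (fun k => (φ k).toLinearMap) (g * h) := by
  intro g h
  have hg : π (g : Ghat) = 1 := MonoidHom.mem_ker.mp g.2
  have hh : π (h : Ghat) = 1 := MonoidHom.mem_ker.mp h.2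
  have hkconj : kconj π ς h⁻¹ * kconj π ς g⁻¹ = kconj π ς (g * h)⁻¹ := by
    apply Subtype.ext
    show (ς * ((h⁻¹ : π.ker) : Ghat) * ς⁻¹) * (ς * ((g⁻¹ : π.ker) : Ghat) * ς⁻¹)
      = ς * (((g * h)⁻¹ : π.ker) : Ghat) * ς⁻¹
    push_cast
    group
  simp only [dualTw]
  rw [LinearMap.smul_comp, LinearMap.comp_smul, LinearMap.dualMap_comp_dualMap,
    hφ (kconj π ς h⁻¹) (kconj π ς g⁻¹), dualMap_smul', hkconj]
  rw [smul_smul, smul_smul, smul_smul]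
  congr 1
  have hk := key π lam hnorm hcoc ς (g : Ghat) (h : Ghat) hς hg hh
  have harg : ((kconj π ς h⁻¹ : π.ker) : Ghat) = ς * ((h : Ghat))⁻¹ * ς⁻¹ := by
    show ς * ((h⁻¹ : π.ker) : Ghat) * ς⁻¹ = _
    push_cast
    rfl
  have harg2 : ((kconj π ς g⁻¹ : π.ker) : Ghat) = ς * ((g : Ghat))⁻¹ * ς⁻¹ := by
    show ς * ((g⁻¹ : π.ker) : Ghat) * ς⁻¹ = _
    push_cast
    rfl
  rw [harg, harg2]
  push_cast [Units.val_inv_eq_inv_val] at hk ⊢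
  linear_combination hk
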